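/- arXiv:2210.12149 — 8 statements merged into one kernel-verified Lean document; each statement's English description precedes it below -/
import Mathlib

section
/- For a prime p and positive integer α, the entropy H̄(p^α) := log σ(p^α) - (1/σ(p^α)) · Σ_{d|p^α} d·log d equals -((α+1)·log p)/(p^{α+1}-1) + log((1-p^{-(α+1)})/(p-1)) + (p·log p)/(p-1). -/
open Real Filter

/-- σ(n): the sum of the divisors of n. -/
def sigma1 (n : ℕ) : ℕ := ∑ d ∈ n.divisors, d

/-- The entropy H̄ of a natural number. -/
noncomputable def Hbar (n : ℕ) : ℝ :=
  Real.log (sigma1 n) -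
    (1 / (sigma1 n : ℝ)) * ∑ d ∈ n.divisors, (d : ℝ) * Real.log d

lemma key_sum (x : ℝ) (n : ℕ) :
    (x - 1) ^ 2 * ∑ i ∈ Finset.range (n + 1), (i : ℝ) * x ^ i
      = n * x ^ (n + 2) - (n + 1) * x ^ (n + 1) + x := by
  induction n with
  | zero => simp
  | succ n ih =>
    rw [Finset.sum_range_succ, mul_add, ih]
    push_cast
    ring

theorem stmt_0 (p α : ℕ) (hp : p.Prime) (hα : 1 ≤ α) :
    Hbar (p ^ α) =
      -(((α : ℝ) + 1) * Real.log p) / ((p : ℝ) ^ (α + 1) - 1) +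
        Real.log ((1 - ((p : ℝ) ^ (α + 1))⁻¹) / ((p : ℝ) - 1)) +
        (p : ℝ) * Real.log p / ((p : ℝ) - 1) := by
  have hx2 : (2 : ℝ) ≤ (p : ℝ) := by exact_mod_cast hp.two_le
  set x : ℝ := (p : ℝ) with hxdef
  have hx1 : 1 < x := by linarith
  have hxne : x ≠ 1 := ne_of_gt hx1
  have hxm1 : (0:ℝ) < x - 1 := by linarith
  have hA1 : 1 < x ^ (α + 1) := one_lt_pow₀ hx1 (by omega)
  have hAp : (0:ℝ) < x ^ (α + 1) - 1 := by linarith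
  have hApos : (0:ℝ) < x ^ (α + 1) := by linarith
  have hdiv : (p ^ α).divisors
      = (Finset.range (α + 1)).map ⟨(p ^ ·), Nat.pow_right_injective hp.two_le⟩ :=
    Nat.divisors_prime_pow hp α
  have hσ : (sigma1 (p ^ α) : ℝ) = (x ^ (α + 1) - 1) / (x - 1) := by
    rw [sigma1, hdiv, Finset.sum_map]
    simp only [Function.Embedding.coeFn_mk]
    push_cast
    rw [geom_sum_eq hxne]
  have hS : (∑ d ∈ (p ^ α).divisors, (d : ℝ) * Real.log d)
      = (∑ i ∈ Finset.range (α + 1), (i : ℝ) * x ^ i) * Real.log x := by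
    rw [hdiv, Finset.sum_map, Finset.sum_mul]
    apply Finset.sum_congr rfl
    intro i _
    simp only [Function.Embedding.coeFn_mk]
    push_cast
    rw [Real.log_pow]
    ring
  set T : ℝ := ∑ i ∈ Finset.range (α + 1), (i : ℝ) * x ^ i with hTdef
  have hT : T = ((α:ℝ) * x ^ (α + 2) - ((α:ℝ) + 1) * x ^ (α + 1) + x) / (x - 1) ^ 2 := by
    rw [eq_div_iff (by positivity), mul_comm]
    exact key_sum x α
  have hlog1 : Real.log ((x ^ (α + 1) - 1) / (x - 1))
      = Real.log (x ^ (α + 1) - 1) - Real.log (x - 1) :=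
    Real.log_div (ne_of_gt hAp) (ne_of_gt hxm1)
  have hlog2 : Real.log ((1 - (x ^ (α + 1))⁻¹) / (x - 1))
      = Real.log (x ^ (α + 1) - 1) - ((α:ℝ) + 1) * Real.log x - Real.log (x - 1) := by
    have h1 : 1 - (x ^ (α + 1))⁻¹ = (x ^ (α + 1) - 1) / x ^ (α + 1) := by
      field_simp
    rw [h1, Real.log_div (by positivity) (ne_of_gt hxm1),
      Real.log_div (ne_of_gt hAp) (ne_of_gt hApos)]
    rw [Real.log_pow]
    push_cast
    ring
  rw [Hbar, hσ, hS, hlog1, hlog2, hT]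
  field_simp
  ring
end

section
/- The entropy H̄ is additive on coprime arguments: if m, n are positive integers with gcd(m,n)=1, then H̄(mn) = H̄(m) + H̄(n). -/
open Real Filter

open scoped Pointwise

lemma aux_inj {m n : ℕ} (h : Nat.Coprime m n) {a b a' b' : ℕ}
    (ha : a ∣ m) (hb : b ∣ n) (ha' : a' ∣ m) (hb' : b' ∣ n)
    (ha0 : a ≠ 0) (hb0 : b ≠ 0)
    (heq : a * b = a' * b') : a = a' ∧ b = b' := by
  have key : ∀ {x y x' y' : ℕ}, x ∣ m → y ∣ n → x' ∣ m → y' ∣ n →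
      x * y = x' * y' → x ∣ x' := by
    intro x y x' y' hx hy hx' hy' he
    have hcop : Nat.Coprime x y' := Nat.Coprime.coprime_dvd_left hx
      (Nat.Coprime.coprime_dvd_right hy' h)
    have : x ∣ x' * y' := he ▸ Dvd.intro y rfl
    exact (Nat.Coprime.dvd_of_dvd_mul_right hcop this)
  have h1 : a ∣ a' := key ha hb ha' hb' heq
  have h2 : a' ∣ a := key ha' hb' ha hb heq.symm
  have haa : a = a' := Nat.dvd_antisymm h1 h2
  refine ⟨haa, ?_⟩
  subst haa
  exact Nat.eq_of_mul_eq_mul_left (Nat.pos_of_ne_zero ha0) heq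

lemma sum_divisors_mul_eq {m n : ℕ} (h : Nat.Coprime m n) (hm : 0 < m) (hn : 0 < n)
    (f : ℕ → ℝ) :
    ∑ d ∈ (m * n).divisors, f d =
      ∑ a ∈ m.divisors, ∑ b ∈ n.divisors, f (a * b) := by
  rw [Nat.divisors_mul, Finset.mul_def, Finset.sum_image, Finset.sum_product]
  intro p hp q hq hpq
  simp only [Finset.mem_coe, Finset.mem_product, Nat.mem_divisors] at hp hq
  have := aux_inj h hp.1.1 hp.2.1 hq.1.1 hq.2.1
    (fun h0 => hm.ne' (by simpa [h0] using hp.1.1))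
    (fun h0 => hn.ne' (by simpa [h0] using hp.2.1)) hpq
  exact Prod.ext this.1 this.2

theorem stmt_1 (m n : ℕ) (hm : 0 < m) (hn : 0 < n) (h : Nat.gcd m n = 1) :
    Hbar (m * n) = Hbar m + Hbar n := by
  have hco : Nat.Coprime m n := h
  have hsm : 0 < sigma1 m := by
    apply Finset.sum_pos (fun d hd => Nat.pos_of_mem_divisors hd)
    exact ⟨1, Nat.one_mem_divisors.2 hm.ne'⟩
  have hsn : 0 < sigma1 n := by
    apply Finset.sum_pos (fun d hd => Nat.pos_of_mem_divisors hd)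
    exact ⟨1, Nat.one_mem_divisors.2 hn.ne'⟩
  have hsigma : sigma1 (m * n) = sigma1 m * sigma1 n := hco.sum_divisors_mul
  have hsum : ∑ d ∈ (m * n).divisors, (d : ℝ) * Real.log d =
      (sigma1 n : ℝ) * ∑ d ∈ m.divisors, (d : ℝ) * Real.log d +
      (sigma1 m : ℝ) * ∑ d ∈ n.divisors, (d : ℝ) * Real.log d := by
    rw [sum_divisors_mul_eq hco hm hn]
    have : ∀ a ∈ m.divisors, ∀ b ∈ n.divisors,
        ((a * b : ℕ) : ℝ) * Real.log (a * b : ℕ) =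
          (b : ℝ) * ((a : ℝ) * Real.log a) + (a : ℝ) * ((b : ℝ) * Real.log b) := by
      intro a ha b hb
      have ha0 : (a : ℝ) ≠ 0 := Nat.cast_ne_zero.2 (Nat.pos_of_mem_divisors ha).ne'
      have hb0 : (b : ℝ) ≠ 0 := Nat.cast_ne_zero.2 (Nat.pos_of_mem_divisors hb).ne'
      push_cast
      rw [Real.log_mul ha0 hb0]
      ring
    rw [Finset.sum_congr rfl fun a ha => Finset.sum_congr rfl fun b hb => this a ha b hb]
    simp only [Finset.sum_add_distrib, ← Finset.sum_mul, ← Finset.mul_sum]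
    unfold sigma1
    push_cast
    ring
  unfold Hbar
  rw [hsigma, hsum]
  have hm0 : (sigma1 m : ℝ) ≠ 0 := Nat.cast_ne_zero.2 hsm.ne'
  have hn0 : (sigma1 n : ℝ) ≠ 0 := Nat.cast_ne_zero.2 hsn.ne'
  push_cast
  rw [Real.log_mul hm0 hn0]
  field_simp
  ring
end

section
/- For a prime p, the limit as α → ∞ of H̄(p^α) equals (p·log p)/(p-1) - log(p-1). -/
open Real Filter

lemma sum_i_pow (x : ℝ) (n : ℕ) :
    (x - 1) ^ 2 * ∑ i ∈ Finset.range n, (i : ℝ) * x ^ i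
      = ((n : ℝ) - 1) * x ^ (n + 1) - (n : ℝ) * x ^ n + x := by
  induction n with
  | zero => simp
  | succ n ih =>
    rw [Finset.sum_range_succ, mul_add, ih]
    push_cast
    ring

lemma hbar_eq (p : ℕ) (hp : p.Prime) (α : ℕ) :
    Hbar (p ^ α) =
      Real.log (1 - ((p : ℝ)⁻¹) ^ (α + 1)) - Real.log ((p : ℝ) - 1) +
        Real.log p * (((p : ℝ) - ((α : ℝ) + 2) * p * ((p : ℝ)⁻¹) ^ (α + 1)
            + ((α : ℝ) + 1) * ((p : ℝ)⁻¹) ^ (α + 1))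
          / (((p : ℝ) - 1) * (1 - ((p : ℝ)⁻¹) ^ (α + 1)))) := by
  set q : ℝ := (p : ℝ) with hqdef
  have hq1 : 1 < q := by rw [hqdef]; exact_mod_cast hp.one_lt
  have hq0 : 0 < q := lt_trans one_pos hq1
  have hqne1 : q ≠ 1 := ne_of_gt hq1
  have hq10 : q - 1 ≠ 0 := sub_ne_zero.mpr (ne_of_gt hq1)
  have ht1 : 1 < q ^ (α + 1) := one_lt_pow₀ hq1 (Nat.succ_ne_zero α)
  set t : ℝ := q ^ (α + 1) with htdef
  have ht0 : (0:ℝ) < t := lt_trans one_pos ht1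
  have htne : t ≠ 0 := ne_of_gt ht0
  have ht10 : t - 1 ≠ 0 := sub_ne_zero.mpr (ne_of_gt ht1)
  have hu : ((q⁻¹) ^ (α + 1)) = t⁻¹ := by rw [inv_pow]
  -- sigma1 (p ^ α)
  have hs : ((sigma1 (p ^ α) : ℝ)) = (t - 1) / (q - 1) := by
    rw [sigma1, Nat.sum_divisors_prime_pow hp]
    push_cast
    rw [geom_sum_eq hqne1]
  -- sum d log d
  have hd : (∑ d ∈ (p ^ α).divisors, (d : ℝ) * Real.log d)
      = Real.log q * ∑ i ∈ Finset.range (α + 1), (i : ℝ) * q ^ i := by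
    rw [Nat.sum_divisors_prime_pow hp, Finset.mul_sum]
    refine Finset.sum_congr rfl fun i _ => ?_
    push_cast
    rw [Real.log_pow]
    ring
  have hG0 : (t - 1) / (q - 1) > 0 := div_pos (by linarith) (by linarith)
  have hT : (∑ i ∈ Finset.range (α + 1), (i : ℝ) * q ^ i)
      = ((α : ℝ) * q ^ (α + 2) - ((α : ℝ) + 1) * q ^ (α + 1) + q) / (q - 1) ^ 2 := by
    have := sum_i_pow q (α + 1)
    push_cast at this
    field_simp
    rw [mul_comm] at this
    rw [this]
    ring
  rw [Hbar, hs, hd, hT]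
  have hlog : Real.log ((t - 1) / (q - 1))
      = (α + 1 : ℝ) * Real.log q + Real.log (1 - t⁻¹) - Real.log (q - 1) := by
    rw [Real.log_div ht10 hq10]
    have h1 : t - 1 = t * (1 - t⁻¹) := by field_simp
    rw [h1, Real.log_mul htne (by
      have : t⁻¹ < 1 := inv_lt_one_of_one_lt₀ ht1
      intro h; rw [sub_eq_zero] at h; exact absurd h.symm (ne_of_lt this))]
    rw [htdef, Real.log_pow]
    push_cast
    ring
  rw [hlog, hu]
  have hq2 : q ^ (α + 2) = t * q := by rw [htdef, ← pow_succ]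
  rw [hq2]
  have hu1 : (1 : ℝ) - t⁻¹ ≠ 0 := by
    have : t⁻¹ < 1 := inv_lt_one_of_one_lt₀ ht1
    intro h; rw [sub_eq_zero] at h; exact absurd h.symm (ne_of_lt this)
  field_simp
  ring

theorem stmt_2 (p : ℕ) (hp : p.Prime) :
    Tendsto (fun α : ℕ => Hbar (p ^ α)) atTop
      (nhds ((p : ℝ) * Real.log p / ((p : ℝ) - 1) - Real.log ((p : ℝ) - 1))) := by
  set q : ℝ := (p : ℝ) with hqdef
  have hq1 : 1 < q := by rw [hqdef]; exact_mod_cast hp.one_lt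
  have hq10 : q - 1 ≠ 0 := sub_ne_zero.mpr (ne_of_gt hq1)
  have hr0 : (0:ℝ) ≤ q⁻¹ := inv_nonneg.mpr (by linarith)
  have hr1 : q⁻¹ < 1 := inv_lt_one_of_one_lt₀ hq1
  set u : ℕ → ℝ := fun α => (q⁻¹) ^ (α + 1) with hudef
  have hu0 : Tendsto u atTop (nhds 0) := by
    have := (tendsto_pow_atTop_nhds_zero_of_lt_one hr0 hr1).comp
      (tendsto_add_atTop_nat 1)
    exact this
  have hv0 : Tendsto (fun α : ℕ => (α : ℝ) * u α) atTop (nhds 0) := by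
    have h := (tendsto_pow_const_mul_const_pow_of_lt_one 1 hr0 hr1).mul_const q⁻¹
    rw [zero_mul] at h
    refine h.congr fun α => ?_
    simp [hudef, pow_succ]
    ring
  -- limit of the explicit formula
  have hnum : Tendsto (fun α : ℕ => q - ((α : ℝ) + 2) * q * u α + ((α : ℝ) + 1) * u α)
      atTop (nhds q) := by
    have h1 : Tendsto (fun α : ℕ => ((α : ℝ) + 2) * q * u α) atTop (nhds 0) := by
      have := (hv0.mul_const q).add ((hu0.const_mul (2 * q)))
      rw [zero_mul, zero_add, mul_zero] at this
      refine this.congr fun α => ?_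
      ring
    have h2 : Tendsto (fun α : ℕ => ((α : ℝ) + 1) * u α) atTop (nhds 0) := by
      have := hv0.add (hu0.const_mul 1)
      rw [mul_zero, add_zero] at this
      refine this.congr fun α => ?_
      ring
    have := ((tendsto_const_nhds (x := q)).sub h1).add h2
    simpa using this
  have hden : Tendsto (fun α : ℕ => (q - 1) * (1 - u α)) atTop (nhds (q - 1)) := by
    have := ((tendsto_const_nhds (x := (1:ℝ))).sub hu0).const_mul (q - 1)
    simpa using this
  have hfrac : Tendsto (fun α : ℕ =>
      (q - ((α : ℝ) + 2) * q * u α + ((α : ℝ) + 1) * u α) / ((q - 1) * (1 - u α)))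
      atTop (nhds (q / (q - 1))) := hnum.div hden hq10
  have hlog1 : Tendsto (fun α : ℕ => Real.log (1 - u α)) atTop (nhds 0) := by
    have h1 : Tendsto (fun α : ℕ => 1 - u α) atTop (nhds 1) := by
      have := (tendsto_const_nhds (x := (1:ℝ))).sub hu0
      simpa using this
    have := ((Real.continuousAt_log one_ne_zero).tendsto).comp h1
    simpa [Function.comp_def] using this
  have hmain := (hlog1.sub (tendsto_const_nhds (x := Real.log (q - 1)))).add (hfrac.const_mul (Real.log q))
  have heq : (0 : ℝ) - Real.log (q - 1) + Real.log q * (q / (q - 1))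
      = q * Real.log q / (q - 1) - Real.log (q - 1) := by ring
  rw [heq] at hmain
  refine Tendsto.congr (fun α => ?_) hmain
  exact (hbar_eq p hp α).symm
end

section
/- Let p be prime with gcd(n,p)=1, n ≥ 2. Then H(n·p^α) = (Ω(n)·H(n))/(Ω(n)+α) + log(Ω(n)+α) - (Ω(n)·log Ω(n) + α·log α)/(Ω(n)+α) for all α ≥ 1. -/
open Real Filter

/-- Ω(n): number of prime factors of n counted with multiplicity. -/
def Omega (n : ℕ) : ℕ := ∑ p ∈ n.primeFactors, n.factorization p

/-- The entropy H of a natural number. -/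
noncomputable def Hent (n : ℕ) : ℝ :=
  Real.log (Omega n) -
    (1 / (Omega n : ℝ)) *
      ∑ p ∈ n.primeFactors, (n.factorization p : ℝ) * Real.log (n.factorization p)

lemma primeFactors_mul_pow (n p : ℕ) (hn : 2 ≤ n) (hp : p.Prime) (hcop : ¬ p ∣ n)
    (α : ℕ) (hα : 1 ≤ α) :
    (n * p ^ α).primeFactors = insert p n.primeFactors := by
  rw [Nat.primeFactors_mul (by omega) (pow_ne_zero _ hp.pos.ne'),
    Nat.primeFactors_pow p (by omega), Nat.Prime.primeFactors hp]
  rw [Finset.union_comm, ← Finset.insert_eq]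

lemma fact_mul_pow_self (n p : ℕ) (hn : 2 ≤ n) (hp : p.Prime) (hcop : ¬ p ∣ n)
    (α : ℕ) : (n * p ^ α).factorization p = α := by
  rw [Nat.factorization_mul (by omega) (pow_ne_zero _ hp.pos.ne'),
    Nat.Prime.factorization_pow hp]
  simp [Nat.factorization_eq_zero_of_not_dvd hcop]

lemma fact_mul_pow_mem (n p : ℕ) (hn : 2 ≤ n) (hp : p.Prime) (hcop : ¬ p ∣ n)
    (α : ℕ) (q : ℕ) (hq : q ∈ n.primeFactors) :
    (n * p ^ α).factorization q = n.factorization q := by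
  have hqp : q ≠ p := by
    rintro rfl
    exact hcop (Nat.dvd_of_mem_primeFactors hq)
  rw [Nat.factorization_mul (by omega) (pow_ne_zero _ hp.pos.ne'),
    Nat.Prime.factorization_pow hp]
  simp [Finsupp.single_apply, hqp.symm]

theorem stmt_9 (n p : ℕ) (hn : 2 ≤ n) (hp : p.Prime) (hcop : ¬ p ∣ n)
    (α : ℕ) (hα : 1 ≤ α) :
    Hent (n * p ^ α) =
      (Omega n : ℝ) * Hent n / ((Omega n : ℝ) + α) +
        Real.log ((Omega n : ℝ) + α) -
        ((Omega n : ℝ) * Real.log (Omega n) + (α : ℝ) * Real.log α) /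
          ((Omega n : ℝ) + α) := by
  have hpmem : p ∉ n.primeFactors := fun h => hcop (Nat.dvd_of_mem_primeFactors h)
  have hPF := primeFactors_mul_pow n p hn hp hcop α hα
  have hΩ : Omega (n * p ^ α) = α + Omega n := by
    rw [Omega, hPF, Finset.sum_insert hpmem, fact_mul_pow_self n p hn hp hcop α]
    congr 1
    exact Finset.sum_congr rfl (fun q hq => fact_mul_pow_mem n p hn hp hcop α q hq)
  have hS : ∑ q ∈ (n * p ^ α).primeFactors,
      ((n * p ^ α).factorization q : ℝ) * Real.log ((n * p ^ α).factorization q)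
      = (α : ℝ) * Real.log α +
        ∑ q ∈ n.primeFactors, (n.factorization q : ℝ) * Real.log (n.factorization q) := by
    rw [hPF, Finset.sum_insert hpmem, fact_mul_pow_self n p hn hp hcop α]
    congr 1
    exact Finset.sum_congr rfl (fun q hq => by
      rw [fact_mul_pow_mem n p hn hp hcop α q hq])
  have hΩpos : 0 < Omega n := by
    have hne : n.primeFactors.Nonempty := Nat.nonempty_primeFactors.mpr hn
    refine Finset.sum_pos (fun q hq => ?_) hne
    exact Nat.Prime.factorization_pos_of_dvd (Nat.prime_of_mem_primeFactors hq)
      (by omega) (Nat.dvd_of_mem_primeFactors hq)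
  have h1 : (0:ℝ) < (Omega n : ℝ) := by exact_mod_cast hΩpos
  have h2 : (0:ℝ) < (Omega n : ℝ) + α := by positivity
  rw [Hent, Hent, hΩ, hS]
  push_cast
  rw [show ((α : ℝ) + Omega n) = (Omega n : ℝ) + α by ring]
  field_simp
  ring
end

section
/- If p is a prime not dividing n (n ≥ 2 a positive integer), then H(n·p^α) tends to 0 as α → ∞. -/
open Real Filter

theorem stmt_10 (n p : ℕ) (hn : 2 ≤ n) (hp : p.Prime) (hcop : ¬ p ∣ n) :
    Tendsto (fun α : ℕ => Hent (n * p ^ α)) atTop (nhds 0) := by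
  have hn0 : n ≠ 0 := by omega
  have hpn : p ∉ n.primeFactors := by
    simp [Nat.mem_primeFactors, hcop]
  set k : ℕ := Omega n with hk
  set C : ℝ := ∑ q ∈ n.primeFactors, (n.factorization q : ℝ) * Real.log (n.factorization q) with hC
  have hfact : ∀ α : ℕ, 1 ≤ α → (n * p ^ α).primeFactors = insert p n.primeFactors := by
    intro α hα
    rw [Nat.primeFactors_mul hn0 (pow_ne_zero α hp.pos.ne'),
      Nat.primeFactors_pow _ (by omega), hp.primeFactors]
    ext q; simp [or_comm]
  have hfp : ∀ α : ℕ, (n * p ^ α).factorization p = α := by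
    intro α
    rw [Nat.factorization_mul hn0 (pow_ne_zero _ hp.pos.ne'), hp.factorization_pow]
    simp [Nat.factorization_eq_zero_of_not_dvd hcop]
  have hfq : ∀ α q, q ∈ n.primeFactors → (n * p ^ α).factorization q = n.factorization q := by
    intro α q hq
    rw [Nat.factorization_mul hn0 (pow_ne_zero _ hp.pos.ne'), hp.factorization_pow]
    have : q ≠ p := fun h => hpn (h ▸ hq)
    simp [Finsupp.single_apply, this.symm]
  have hOmega : ∀ α : ℕ, 1 ≤ α → Omega (n * p ^ α) = α + k := by
    intro α hα
    rw [Omega, hfact α hα, Finset.sum_insert hpn, hfp]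
    congr 1
    exact Finset.sum_congr rfl (fun q hq => hfq α q hq)
  have hSum : ∀ α : ℕ, 1 ≤ α →
      (∑ q ∈ (n*p^α).primeFactors, ((n*p^α).factorization q : ℝ) * Real.log ((n*p^α).factorization q))
        = α * Real.log α + C := by
    intro α hα
    rw [hfact α hα, Finset.sum_insert hpn, hfp, hC]
    congr 1
    exact Finset.sum_congr rfl (fun q hq => by rw [hfq α q hq])
  have hH : ∀ α : ℕ, 1 ≤ α →
      Hent (n * p ^ α) = Real.log (α + k) - (1 / ((α : ℝ) + k)) * ((α : ℝ) * Real.log α + C) := by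
    intro α hα
    rw [Hent, hOmega α hα, hSum α hα]
    push_cast
    ring_nf
  -- real limit
  have hg : Tendsto (fun x : ℝ => Real.log (x + k) - (1 / (x + k)) * (x * Real.log x + C))
      atTop (nhds 0) := by
    have h1 : Tendsto (fun x : ℝ => Real.log ((x + k) / x)) atTop (nhds 0) := by
      have : Tendsto (fun x : ℝ => (x + k) / x) atTop (nhds 1) := by
        have := (tendsto_const_nhds.add (tendsto_const_nhds.div_atTop tendsto_id) :
          Tendsto (fun x : ℝ => 1 + (k : ℝ) / x) atTop (nhds (1 + 0)))
        rw [add_zero] at this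
        refine this.congr' ?_
        filter_upwards [eventually_gt_atTop (0:ℝ)] with x hx
        field_simp
      have := ((Real.continuousAt_log one_ne_zero).tendsto.comp this)
      simpa [Function.comp_def] using this
    have h2 : Tendsto (fun x : ℝ => ((k : ℝ) * Real.log x - C) / (x + k)) atTop (nhds 0) := by
      have hlog : Tendsto (fun x : ℝ => Real.log x / (x + k)) atTop (nhds 0) := by
        have := Real.tendsto_pow_log_div_mul_add_atTop 1 (k : ℝ) 1 one_ne_zero
        simpa using this
      have hc : Tendsto (fun x : ℝ => C / (x + k)) atTop (nhds 0) :=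
        tendsto_const_nhds.div_atTop (tendsto_atTop_add_const_right _ _ tendsto_id)
      have := ((hlog.const_mul (k : ℝ)).sub hc)
      rw [mul_zero, sub_zero] at this
      refine this.congr (fun x => by ring)
    have := h1.add h2
    rw [add_zero] at this
    refine this.congr' ?_
    filter_upwards [eventually_gt_atTop (0:ℝ)] with x hx
    have hxk : x + k > 0 := by positivity
    rw [Real.log_div (by positivity) hx.ne']
    field_simp
    ring
  have := hg.comp tendsto_natCast_atTop_atTop (α := ℕ)
  refine this.congr' ?_
  filter_upwards [eventually_ge_atTop 1] with α hα
  simp only [Function.comp]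
  rw [hH α hα]
end

section
/- If p is a prime not dividing n (n ≥ 2), then H̄(n·p^α) tends to H̄(n) + (p·log p)/(p-1) - log(p-1) as α → ∞. -/
open Real Filter

lemma sum_divisors_coprime {M : Type*} [AddCommMonoid M] {m n : ℕ} (hm : m ≠ 0) (hn : n ≠ 0)
    (h : m.Coprime n) (f : ℕ → M) :
    ∑ d ∈ (m * n).divisors, f d = ∑ x ∈ m.divisors ×ˢ n.divisors, f (x.1 * x.2) := by
  refine Finset.sum_nbij' (fun d => (Nat.gcd d m, Nat.gcd d n)) (fun x => x.1 * x.2)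
    ?_ ?_ ?_ ?_ ?_
  · intro d hd
    rw [Nat.mem_divisors] at hd
    simp only [Finset.mem_product, Nat.mem_divisors]
    exact ⟨⟨Nat.gcd_dvd_right _ _, hm⟩, ⟨Nat.gcd_dvd_right _ _, hn⟩⟩
  · intro x hx
    simp only [Finset.mem_product, Nat.mem_divisors] at hx
    exact Nat.mem_divisors.mpr ⟨mul_dvd_mul hx.1.1 hx.2.1, mul_ne_zero hm hn⟩
  · intro d hd
    rw [Nat.mem_divisors] at hd
    dsimp only
    rw [← Nat.Coprime.gcd_mul _ h, Nat.gcd_eq_left hd.1]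
  · intro x hx
    simp only [Finset.mem_product, Nat.mem_divisors] at hx
    have h1 : x.2.Coprime m := Nat.Coprime.coprime_dvd_left hx.2.1 h.symm
    have h2 : x.1.Coprime n := Nat.Coprime.coprime_dvd_left hx.1.1 h
    have e1 : Nat.gcd (x.1 * x.2) m = x.1 := by
      rw [Nat.Coprime.gcd_mul_right_cancel _ h1, Nat.gcd_eq_left hx.1.1]
    have e2 : Nat.gcd (x.1 * x.2) n = x.2 := by
      rw [mul_comm, Nat.Coprime.gcd_mul_right_cancel _ h2, Nat.gcd_eq_left hx.2.1]
    rw [e1, e2]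
  · intro d hd
    rw [Nat.mem_divisors] at hd
    dsimp only
    rw [← Nat.Coprime.gcd_mul _ h, Nat.gcd_eq_left hd.1]

lemma limit_part {q : ℝ} (hq : 1 < q) :
    Tendsto (fun α : ℕ => Real.log (∑ i ∈ Finset.range (α+1), q^i) -
      Real.log q * ((∑ i ∈ Finset.range (α+1), (i:ℝ) * q^i) /
        (∑ i ∈ Finset.range (α+1), q^i)))
      atTop (nhds (q * Real.log q / (q - 1) - Real.log (q - 1))) := by
  have hq0 : q ≠ 0 := by linarith
  have hq1 : q - 1 ≠ 0 := by linarith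
  set r : ℝ := q⁻¹ with hr
  have hr0 : 0 < r := by positivity
  have hr1 : r < 1 := by
    rw [hr, inv_lt_one_iff₀]; right; exact hq
  have h1r : (0:ℝ) < 1 - r := by linarith
  set A : ℕ → ℝ := fun α => ∑ k ∈ Finset.range (α+1), (k:ℝ) * r^k with hA_def
  set B : ℕ → ℝ := fun α => ∑ k ∈ Finset.range (α+1), r^k with hB_def
  have hBpos : ∀ α : ℕ, 0 < B α := fun α =>
    Finset.sum_pos (fun i _ => pow_pos hr0 i) ⟨0, Finset.mem_range.mpr (Nat.succ_pos α)⟩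
  have hpow : ∀ {α k : ℕ}, k ≤ α → q ^ (α - k) = q ^ α * r ^ k := by
    intro α k hk
    have h : q ^ (α - k) * q ^ k = q ^ α := pow_sub_mul_pow q hk
    rw [hr, inv_pow, ← div_eq_mul_inv, eq_div_iff (pow_ne_zero k hq0), h]
  have hSB : ∀ α : ℕ, (∑ i ∈ Finset.range (α+1), q^i) = q^α * B α := by
    intro α
    rw [hB_def]
    dsimp only
    rw [Finset.mul_sum, ← Finset.sum_range_reflect (fun i => q^i) (α+1)]
    refine Finset.sum_congr rfl fun k hk => ?_
    have hk' : k ≤ α := Nat.lt_succ_iff.mp (Finset.mem_range.mp hk)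
    simp only [Nat.add_sub_cancel]
    exact hpow hk'
  have hTB : ∀ α : ℕ, (∑ i ∈ Finset.range (α+1), (i:ℝ) * q^i)
      = q^α * ((α:ℝ) * B α - A α) := by
    intro α
    rw [hA_def, hB_def]
    dsimp only
    rw [Finset.mul_sum, mul_sub, Finset.mul_sum, Finset.mul_sum, ← Finset.sum_sub_distrib,
      ← Finset.sum_range_reflect (fun i => (i:ℝ) * q^i) (α+1)]
    refine Finset.sum_congr rfl fun k hk => ?_
    have hk' : k ≤ α := Nat.lt_succ_iff.mp (Finset.mem_range.mp hk)
    simp only [Nat.add_sub_cancel]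
    rw [hpow hk', Nat.cast_sub hk']
    ring
  have key : ∀ α : ℕ, Real.log (∑ i ∈ Finset.range (α+1), q^i) -
      Real.log q * ((∑ i ∈ Finset.range (α+1), (i:ℝ) * q^i) /
        (∑ i ∈ Finset.range (α+1), q^i))
      = Real.log (B α) + Real.log q * (A α / B α) := by
    intro α
    rw [hSB α, hTB α, Real.log_mul (pow_ne_zero _ hq0) (hBpos α).ne', Real.log_pow]
    have hdiv : q^α * ((α:ℝ) * B α - A α) / (q^α * B α) = (α:ℝ) - A α / B α := by
      rw [mul_div_mul_left _ _ (pow_ne_zero α hq0), sub_div, mul_div_assoc, div_self (hBpos α).ne', mul_one]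
    rw [hdiv]
    ring
  have hAlim : Tendsto A atTop (nhds (r / (1 - r)^2)) := by
    have h := (hasSum_coe_mul_geometric_of_norm_lt_one
      (show ‖r‖ < 1 by rw [Real.norm_eq_abs, abs_of_pos hr0]; exact hr1)).tendsto_sum_nat
    exact h.comp (tendsto_add_atTop_nat 1)
  have hBlim : Tendsto B atTop (nhds ((1 - r)⁻¹)) := by
    have h := (hasSum_geometric_of_lt_one hr0.le hr1).tendsto_sum_nat
    exact h.comp (tendsto_add_atTop_nat 1)
  have hBne : (1 - r)⁻¹ ≠ 0 := by positivity
  have hlogB : Tendsto (fun α => Real.log (B α)) atTop (nhds (Real.log ((1 - r)⁻¹))) :=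
    ((Real.continuousAt_log hBne).tendsto).comp hBlim
  have hABlim : Tendsto (fun α => A α / B α) atTop (nhds ((r / (1 - r)^2) / (1 - r)⁻¹)) :=
    hAlim.div hBlim hBne
  have htot : Tendsto (fun α => Real.log (B α) + Real.log q * (A α / B α)) atTop
      (nhds (Real.log ((1 - r)⁻¹) + Real.log q * ((r / (1 - r)^2) / (1 - r)⁻¹))) :=
    hlogB.add (tendsto_const_nhds.mul hABlim)
  have hval : Real.log ((1 - r)⁻¹) + Real.log q * ((r / (1 - r)^2) / (1 - r)⁻¹)
      = q * Real.log q / (q - 1) - Real.log (q - 1) := by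
    have h1 : (1 - r) = (q - 1) / q := by rw [hr]; field_simp
    have h2 : Real.log ((1 - r)⁻¹) = Real.log q - Real.log (q - 1) := by
      rw [Real.log_inv, h1, Real.log_div hq1 hq0]
      ring
    have h3 : (r / (1 - r)^2) / (1 - r)⁻¹ = 1 / (q - 1) := by
      rw [h1, hr]
      field_simp
    rw [h2, h3]
    field_simp
    ring
  rw [← hval]
  exact htot.congr fun α => (key α).symm

lemma hbar_decomp {n p : ℕ} (hn : n ≠ 0) (hp : p.Prime) (hcop : ¬ p ∣ n) (α : ℕ) :
    Hbar (n * p ^ α) = Hbar n +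
      (Real.log (∑ i ∈ Finset.range (α+1), (p:ℝ)^i) -
        Real.log p * ((∑ i ∈ Finset.range (α+1), (i:ℝ) * (p:ℝ)^i) /
          (∑ i ∈ Finset.range (α+1), (p:ℝ)^i))) := by
  have hq1 : (1:ℝ) < (p:ℝ) := by exact_mod_cast hp.one_lt
  have hpα : p ^ α ≠ 0 := pow_ne_zero _ hp.pos.ne'
  have hco : n.Coprime (p ^ α) :=
    Nat.Coprime.pow_right _ ((hp.coprime_iff_not_dvd.mpr hcop).symm)
  have hσmul : sigma1 (n * p ^ α) = sigma1 n * sigma1 (p ^ α) :=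
    Nat.Coprime.sum_divisors_mul hco
  have hσp : (sigma1 (p ^ α) : ℝ) = ∑ i ∈ Finset.range (α+1), (p:ℝ) ^ i := by
    unfold sigma1
    rw [Nat.sum_divisors_prime_pow hp]
    push_cast
    rfl
  have hσn_pos : 0 < (sigma1 n : ℝ) := by
    have : 0 < sigma1 n :=
      Finset.sum_pos (fun d hd => Nat.pos_of_mem_divisors hd)
        ⟨1, Nat.one_mem_divisors.mpr hn⟩
    exact_mod_cast this
  have hS_pos : 0 < ∑ i ∈ Finset.range (α+1), (p:ℝ) ^ i :=
    Finset.sum_pos (fun i _ => pow_pos (by linarith) i) ⟨0, Finset.mem_range.mpr (Nat.succ_pos α)⟩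
  have hσp_pos : 0 < (sigma1 (p ^ α) : ℝ) := by rw [hσp]; exact hS_pos
  have hLS : (∑ d ∈ (p^α).divisors, (d:ℝ) * Real.log d)
      = Real.log p * ∑ i ∈ Finset.range (α+1), (i:ℝ) * (p:ℝ) ^ i := by
    rw [Nat.sum_divisors_prime_pow hp, Finset.mul_sum]
    refine Finset.sum_congr rfl fun i _ => ?_
    push_cast
    rw [Real.log_pow]
    ring
  have hL : (∑ d ∈ (n * p^α).divisors, (d:ℝ) * Real.log d)
      = (sigma1 (p^α) : ℝ) * (∑ d ∈ n.divisors, (d:ℝ) * Real.log d)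
        + (sigma1 n : ℝ) * (∑ d ∈ (p^α).divisors, (d:ℝ) * Real.log d) := by
    rw [sum_divisors_coprime hn hpα hco]
    rw [Finset.sum_congr rfl (g := fun x =>
        (x.2:ℝ) * ((x.1:ℝ) * Real.log x.1) + (x.1:ℝ) * ((x.2:ℝ) * Real.log x.2))
      (fun x hx => by
        simp only [Finset.mem_product, Nat.mem_divisors] at hx
        have h1 : (x.1:ℝ) ≠ 0 := by
          exact_mod_cast (Nat.pos_of_dvd_of_pos hx.1.1 (Nat.pos_of_ne_zero hn)).ne'
        have h2 : (x.2:ℝ) ≠ 0 := by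
          exact_mod_cast (Nat.pos_of_dvd_of_pos hx.2.1 (Nat.pos_of_ne_zero hpα)).ne'
        push_cast
        rw [Real.log_mul h1 h2]
        ring)]
    rw [Finset.sum_add_distrib]
    congr 1
    · rw [Finset.sum_product, Finset.sum_comm,
        show ((sigma1 (p^α):ℝ)) = ∑ y ∈ (p^α).divisors, (y:ℝ) from by
          unfold sigma1; push_cast; rfl,
        Finset.sum_mul_sum]
    · rw [Finset.sum_product,
        show ((sigma1 n:ℝ)) = ∑ x ∈ n.divisors, (x:ℝ) from by
          unfold sigma1; push_cast; rfl,
        Finset.sum_mul_sum]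
  unfold Hbar
  rw [hσmul, hL, hLS]
  push_cast
  rw [Real.log_mul hσn_pos.ne' hσp_pos.ne', hσp]
  field_simp
  ring

theorem stmt_11 (n p : ℕ) (hn : 2 ≤ n) (hp : p.Prime) (hcop : ¬ p ∣ n) :
    Tendsto (fun α : ℕ => Hbar (n * p ^ α)) atTop
      (nhds (Hbar n + (p : ℝ) * Real.log p / ((p : ℝ) - 1) - Real.log ((p : ℝ) - 1))) := by
  have hn0 : n ≠ 0 := by omega
  have hq : 1 < (p:ℝ) := by exact_mod_cast hp.one_lt
  have h2 := (Tendsto.const_add (Hbar n) (limit_part hq)).congr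
    (fun α => (hbar_decomp hn0 hp hcop α).symm)
  rwa [← add_sub_assoc] at h2
end

section
/- Let p, q, t be distinct primes and k ≥ 1. For m = p^k·q and n = p^k·t we have H(mn) < H(m) + H(n). -/
open Real Filter

lemma Hent_two (p q k : ℕ) (hp : p.Prime) (hq : q.Prime) (hpq : p ≠ q) (hk : 1 ≤ k) :
    Hent (p ^ k * q) = Real.log ((k : ℝ) + 1) - (1 / ((k : ℝ) + 1)) * ((k : ℝ) * Real.log k) := by
  have hk0 : k ≠ 0 := by omega
  have hfac : (p ^ k * q).factorization = Finsupp.single p k + Finsupp.single q 1 := by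
    rw [Nat.factorization_mul (pow_ne_zero _ hp.pos.ne') hq.pos.ne',
      hp.factorization_pow, hq.factorization]
  have hpf : (p ^ k * q).primeFactors = {p, q} := by
    rw [Nat.primeFactors_mul (pow_ne_zero _ hp.pos.ne') hq.pos.ne',
      Nat.primeFactors_pow _ hk0, hp.primeFactors, hq.primeFactors]
    rfl
  have hap : (p ^ k * q).factorization p = k := by
    simp [hfac, Finsupp.single_apply, hpq.symm]
  have haq : (p ^ k * q).factorization q = 1 := by
    simp [hfac, Finsupp.single_apply, hpq]
  have hOm : Omega (p ^ k * q) = k + 1 := by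
    rw [Omega, hpf, Finset.sum_pair hpq, hap, haq]
  rw [Hent, hOm, hpf, Finset.sum_pair hpq, hap, haq]
  push_cast
  simp [Real.log_one]

lemma key (K : ℝ) (hK : 1 ≤ K) :
    Real.log (2 * (K + 1)) - (1 / (2 * (K + 1))) * ((2 * K) * Real.log (2 * K)) <
      (Real.log (K + 1) - (1 / (K + 1)) * (K * Real.log K)) +
      (Real.log (K + 1) - (1 / (K + 1)) * (K * Real.log K)) := by
  have hK0 : (0 : ℝ) < K := by linarith
  have hK1 : (0 : ℝ) < K + 1 := by linarith
  have hlk : Real.log K < Real.log (K + 1) := Real.log_lt_log hK0 (by linarith)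
  have hl2 : Real.log 2 ≤ Real.log (K + 1) := Real.log_le_log (by norm_num) (by linarith)
  have h1 : Real.log 2 + K * Real.log K < (K + 1) * Real.log (K + 1) := by nlinarith
  rw [Real.log_mul (by norm_num) hK1.ne', Real.log_mul (by norm_num) hK0.ne']
  have e1 : Real.log 2 + Real.log (K + 1) -
      (1 / (2 * (K + 1))) * ((2 * K) * (Real.log 2 + Real.log K)) =
      ((K + 1) * (Real.log 2 + Real.log (K + 1)) - K * (Real.log 2 + Real.log K)) / (K + 1) := by
    field_simp
  have e2 : (Real.log (K + 1) - (1 / (K + 1)) * (K * Real.log K)) +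
      (Real.log (K + 1) - (1 / (K + 1)) * (K * Real.log K)) =
      (2 * (K + 1) * Real.log (K + 1) - 2 * K * Real.log K) / (K + 1) := by
    field_simp
    ring
  rw [e1, e2, div_lt_div_iff₀ hK1 hK1]
  nlinarith [h1]

theorem stmt_12 (p q t k : ℕ) (hp : p.Prime) (hq : q.Prime) (ht : t.Prime)
    (hpq : p ≠ q) (hpt : p ≠ t) (hqt : q ≠ t) (hk : 1 ≤ k) :
    Hent ((p ^ k * q) * (p ^ k * t)) < Hent (p ^ k * q) + Hent (p ^ k * t) := by
  have hk0 : k ≠ 0 := by omega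
  have hE : (p ^ k * q) * (p ^ k * t) = p ^ (2 * k) * (q * t) := by ring
  set N := p ^ (2 * k) * (q * t) with hN
  have hqt0 : q * t ≠ 0 := mul_ne_zero hq.pos.ne' ht.pos.ne'
  have hfac : N.factorization =
      Finsupp.single p (2 * k) + (Finsupp.single q 1 + Finsupp.single t 1) := by
    rw [hN, Nat.factorization_mul (pow_ne_zero _ hp.pos.ne') hqt0,
      Nat.factorization_mul hq.pos.ne' ht.pos.ne',
      hp.factorization_pow, hq.factorization, ht.factorization]
  have hpf : N.primeFactors = {p, q, t} := by
    rw [hN, Nat.primeFactors_mul (pow_ne_zero _ hp.pos.ne') hqt0,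
      Nat.primeFactors_pow _ (by omega : 2 * k ≠ 0), hp.primeFactors,
      Nat.primeFactors_mul hq.pos.ne' ht.pos.ne', hq.primeFactors, ht.primeFactors]
    rfl
  have hap : N.factorization p = 2 * k := by
    simp [hfac, Finsupp.single_apply, hpq.symm, hpt.symm]
  have haq : N.factorization q = 1 := by
    simp [hfac, Finsupp.single_apply, hpq, hqt.symm]
  have hat : N.factorization t = 1 := by
    simp [hfac, Finsupp.single_apply, hpt, hqt]
  have hsum : ∀ f : ℕ → ℝ, ∑ x ∈ ({p, q, t} : Finset ℕ), f x = f p + f q + f t := by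
    intro f
    rw [Finset.sum_insert (by simp [hpq, hpt]), Finset.sum_pair hqt]
    ring
  have hOm : Omega N = 2 * k + 2 := by
    rw [Omega, hpf]
    rw [Finset.sum_insert (by simp [hpq, hpt]), Finset.sum_pair hqt, hap, haq, hat]
  have hHN : Hent N = Real.log (2 * ((k : ℝ) + 1)) -
      (1 / (2 * ((k : ℝ) + 1))) * ((2 * (k : ℝ)) * Real.log (2 * (k : ℝ))) := by
    rw [Hent, hOm, hpf, Finset.sum_insert (by simp [hpq, hpt]), Finset.sum_pair hqt,
      hap, haq, hat]
    push_cast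
    simp only [Real.log_one, mul_zero, one_mul, add_zero]
    have h1 : ((k : ℝ) + 1) ≠ 0 := by positivity
    have h2 : (2 : ℝ) * ((k : ℝ) + 1) ≠ 0 := by positivity
    field_simp
  rw [hE, hHN, Hent_two p q k hp hq hpq hk, Hent_two p t k hp ht hpt hk]
  exact key (k : ℝ) (by exact_mod_cast hk)
end

section
/- Let p be a prime not dividing n (n ≥ 2) and α ≥ β ≥ 1 integers. If β ≥ Ω(n)·e^{-H(n)} then H(n·p^α) ≤ H(n·p^β); if α ≤ Ω(n)·e^{-H(n)} then H(n·p^α) ≥ H(n·p^β). -/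
open Real Filter

noncomputable def gfun (Ω S t : ℝ) : ℝ := Real.log (Ω + t) - (S + t * Real.log t) / (Ω + t)

lemma gfun_hasDerivAt (Ω S t : ℝ) (hΩ : 0 < Ω) (ht : 0 < t) :
    HasDerivAt (gfun Ω S) ((S - Ω * Real.log t) / (Ω + t) ^ 2) t := by
  have hne : Ω + t ≠ 0 := by positivity
  have h1 : HasDerivAt (fun t : ℝ => Ω + t) 1 t := (hasDerivAt_id t).const_add Ω
  have h2 : HasDerivAt (fun t : ℝ => Real.log (Ω + t)) (1 / (Ω + t)) t := by
    simpa using h1.log hne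
  have h3 : HasDerivAt (fun t : ℝ => t * Real.log t) (Real.log t + 1) t :=
    Real.hasDerivAt_mul_log ht.ne'
  have h4 : HasDerivAt (fun t : ℝ => S + t * Real.log t) (Real.log t + 1) t := h3.const_add S
  have h5 := h4.div h1 hne
  have h6 := h2.sub h5
  convert h6 using 1
  · rfl
  · rfl
  · rfl
  field_simp
  ring

lemma gfun_diff (Ω S t : ℝ) (hΩ : 0 < Ω) (ht : 0 < t) : DifferentiableAt ℝ (gfun Ω S) t :=
  (gfun_hasDerivAt Ω S t hΩ ht).differentiableAt

lemma omega_pos (n : ℕ) (hn : 2 ≤ n) : 0 < Omega n := by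
  obtain ⟨q, hq, hqd⟩ := Nat.exists_prime_and_dvd (by omega : n ≠ 1)
  have hq' : q ∈ n.primeFactors := Nat.mem_primeFactors.mpr ⟨hq, hqd, by omega⟩
  exact Finset.sum_pos' (fun _ _ => Nat.zero_le _)
    ⟨q, hq', hq.factorization_pos_of_dvd (by omega) hqd⟩

lemma hent_mul_pow (n p : ℕ) (hn : 2 ≤ n) (hp : p.Prime) (hcop : ¬ p ∣ n) (k : ℕ) (hk : 1 ≤ k) :
    Hent (n * p ^ k) = gfun (Omega n : ℝ)
      (∑ q ∈ n.primeFactors, (n.factorization q : ℝ) * Real.log (n.factorization q)) (k : ℝ) := by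
  have hn0 : n ≠ 0 := by omega
  have hpk : p ^ k ≠ 0 := pow_ne_zero _ hp.pos.ne'
  have hpmem : p ∉ n.primeFactors := fun h => hcop (Nat.dvd_of_mem_primeFactors h)
  have hPF : (n * p ^ k).primeFactors = n.primeFactors ∪ {p} := by
    rw [Nat.primeFactors_mul hn0 hpk, Nat.primeFactors_prime_pow (by omega) hp]
  have hfq : ∀ q, (n * p ^ k).factorization q = n.factorization q + (if p = q then k else 0) := by
    intro q
    rw [Nat.factorization_mul hn0 hpk, hp.factorization_pow]
    simp [Finsupp.single_apply]
  have hfp : (n * p ^ k).factorization p = k := by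
    rw [hfq p, Nat.factorization_eq_zero_of_not_dvd hcop]; simp
  have hfq' : ∀ q ∈ n.primeFactors, (n * p ^ k).factorization q = n.factorization q := by
    intro q hq
    rw [hfq q, if_neg (by rintro rfl; exact hpmem hq), Nat.add_zero]
  have hdisj : Disjoint n.primeFactors ({p} : Finset ℕ) := by
    simp [Finset.disjoint_singleton_right, hpmem]
  have hOm : Omega (n * p ^ k) = Omega n + k := by
    rw [Omega, hPF, Finset.sum_union hdisj, Finset.sum_singleton, hfp]
    congr 1
    exact Finset.sum_congr rfl hfq'
  have hS : ∑ q ∈ (n * p ^ k).primeFactors,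
      ((n * p ^ k).factorization q : ℝ) * Real.log ((n * p ^ k).factorization q)
      = (∑ q ∈ n.primeFactors, (n.factorization q : ℝ) * Real.log (n.factorization q))
        + (k : ℝ) * Real.log k := by
    rw [hPF, Finset.sum_union hdisj, Finset.sum_singleton, hfp]
    congr 1
    refine Finset.sum_congr rfl fun q hq => ?_
    rw [hfq' q hq]
  rw [Hent, hOm, hS, gfun]
  push_cast
  ring

lemma gfun_anti (Ω S a b : ℝ) (hΩ : 0 < Ω) (ha : Real.exp (S / Ω) ≤ a) (hab : a ≤ b) :
    gfun Ω S b ≤ gfun Ω S a := by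
  have ha0 : 0 < a := lt_of_lt_of_le (Real.exp_pos _) ha
  have H : AntitoneOn (gfun Ω S) (Set.Icc a b) := by
    have hint : interior (Set.Icc a b) = Set.Ioo a b := interior_Icc
    refine antitoneOn_of_deriv_nonpos (convex_Icc a b) ?_ ?_ ?_
    · intro t ht
      exact (gfun_diff Ω S t hΩ (lt_of_lt_of_le ha0 ht.1)).continuousAt.continuousWithinAt
    · rw [hint]
      intro t ht
      exact (gfun_diff Ω S t hΩ (lt_trans ha0 ht.1)).differentiableWithinAt
    · rw [hint]
      intro t ht
      have ht0 : 0 < t := lt_trans ha0 ht.1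
      rw [(gfun_hasDerivAt Ω S t hΩ ht0).deriv]
      apply div_nonpos_of_nonpos_of_nonneg _ (by positivity)
      have hlog : S / Ω ≤ Real.log t := by
        rw [← Real.log_exp (S / Ω)]
        exact Real.log_le_log (Real.exp_pos _) (le_of_lt (lt_of_le_of_lt ha ht.1))
      have : S ≤ Ω * Real.log t := by
        rw [div_le_iff₀ hΩ] at hlog
        linarith [hlog]
      linarith
  exact H (Set.left_mem_Icc.mpr hab) (Set.right_mem_Icc.mpr hab) hab

lemma gfun_mono (Ω S a b : ℝ) (hΩ : 0 < Ω) (ha : 0 < a) (hab : a ≤ b)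
    (hb : b ≤ Real.exp (S / Ω)) : gfun Ω S a ≤ gfun Ω S b := by
  have H : MonotoneOn (gfun Ω S) (Set.Icc a b) := by
    have hint : interior (Set.Icc a b) = Set.Ioo a b := interior_Icc
    refine monotoneOn_of_deriv_nonneg (convex_Icc a b) ?_ ?_ ?_
    · intro t ht
      exact (gfun_diff Ω S t hΩ (lt_of_lt_of_le ha ht.1)).continuousAt.continuousWithinAt
    · rw [hint]
      intro t ht
      exact (gfun_diff Ω S t hΩ (lt_trans ha ht.1)).differentiableWithinAt
    · rw [hint]
      intro t ht
      have ht0 : 0 < t := lt_trans ha ht.1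
      rw [(gfun_hasDerivAt Ω S t hΩ ht0).deriv]
      apply div_nonneg _ (by positivity)
      have hlog : Real.log t ≤ S / Ω := by
        rw [← Real.log_exp (S / Ω)]
        exact Real.log_le_log ht0 (le_of_lt (lt_of_lt_of_le ht.2 hb))
      have : Ω * Real.log t ≤ S := by
        rw [le_div_iff₀ hΩ] at hlog
        linarith [hlog]
      linarith
  exact H (Set.left_mem_Icc.mpr hab) (Set.right_mem_Icc.mpr hab) hab

theorem stmt_19 (n p : ℕ) (hn : 2 ≤ n) (hp : p.Prime) (hcop : ¬ p ∣ n)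
    (α β : ℕ) (hβ : 1 ≤ β) (hβα : β ≤ α) :
    ((Omega n : ℝ) * Real.exp (-Hent n) ≤ (β : ℝ) →
        Hent (n * p ^ α) ≤ Hent (n * p ^ β)) ∧
      ((α : ℝ) ≤ (Omega n : ℝ) * Real.exp (-Hent n) →
        Hent (n * p ^ β) ≤ Hent (n * p ^ α)) := by
  set Ω : ℝ := (Omega n : ℝ) with hΩdef
  set S : ℝ := ∑ q ∈ n.primeFactors, (n.factorization q : ℝ) * Real.log (n.factorization q)
    with hSdef
  have hΩ : 0 < Ω := by rw [hΩdef]; exact_mod_cast omega_pos n hn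
  have hstar : Ω * Real.exp (-Hent n) = Real.exp (S / Ω) := by
    rw [Hent, neg_sub, ← hΩdef, ← hSdef]
    rw [show (1 / Ω) * S - Real.log Ω = S / Ω - Real.log Ω by ring]
    rw [Real.exp_sub, Real.exp_log hΩ]
    field_simp
  have hα : Hent (n * p ^ α) = gfun Ω S (α : ℝ) :=
    hent_mul_pow n p hn hp hcop α (le_trans hβ hβα)
  have hβ' : Hent (n * p ^ β) = gfun Ω S (β : ℝ) := hent_mul_pow n p hn hp hcop β hβ
  constructor
  · intro h
    rw [hα, hβ']
    exact gfun_anti Ω S (β : ℝ) (α : ℝ) hΩ (hstar ▸ h) (by exact_mod_cast hβα)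
  · intro h
    rw [hα, hβ']
    exact gfun_mono Ω S (β : ℝ) (α : ℝ) hΩ (by exact_mod_cast hβ)
      (by exact_mod_cast hβα) (hstar ▸ h)
end
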